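/- Let k ≥ 1 and p ∈ (1, 2). There exists a constant c = c(k,p) > 0 such that for all z, η ∈ ℝ^k one has |V_p(z) − V_p(η)| ≤ c |V_p(z − η)|. -/

import Mathlib

open Real

lemma bern_neg {s q : ℝ} (hs : 0 ≤ s) (hq0 : -1 ≤ q) (hq1 : q ≤ 0) :
    1 + q * s ≤ (1 + s) ^ q := by
  have h1s : (0:ℝ) < 1 + s := by linarith
  rcases le_or_gt (1 + q * s) 0 with h | h
  · exact h.trans (rpow_pos_of_pos h1s q).le
  · have hr := rpow_one_add_le_one_add_mul_self (by linarith : (-1:ℝ) ≤ s)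
      (by linarith : (0:ℝ) ≤ -q) (by linarith : -q ≤ 1)
    have key : (1 + q * s) * (1 + s) ^ (-q) ≤ 1 := by
      calc (1 + q * s) * (1 + s) ^ (-q) ≤ (1 + q * s) * (1 + -q * s) :=
            mul_le_mul_of_nonneg_left hr h.le
        _ = 1 - q^2 * s^2 := by ring
        _ ≤ 1 := by nlinarith [sq_nonneg (q*s)]
    have hpos : (0:ℝ) < (1 + s) ^ (-q) := rpow_pos_of_pos h1s _
    have := (le_div_iff₀ hpos).mpr key
    rwa [one_div, ← Real.rpow_neg h1s.le, neg_neg] at this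

-- ratio lemma: if t ≤ K*s then (1+s²)^q ≤ (K^2)^(-q) * (1+t²)^q for q ≤ 0, K ≥ 1
lemma ratio_lem {s t K q : ℝ} (hs : 0 ≤ s) (ht0 : 0 ≤ t) (hK : 1 ≤ K) (ht : t ≤ K * s) (hq : q ≤ 0) :
    (1 + s^2) ^ q ≤ (K^2) ^ (-q) * (1 + t^2) ^ q := by
  have h1s : (0:ℝ) < 1 + s^2 := by positivity
  have h1t : (0:ℝ) < 1 + t^2 := by positivity
  have hKpos : (0:ℝ) < K^2 := by positivity
  have hle : 1 + t^2 ≤ K^2 * (1 + s^2) := by nlinarith [mul_self_le_mul_self ht0 ht, sq_nonneg (K*s)]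
  have h1 : (K^2 * (1 + s^2)) ^ q ≤ (1 + t^2) ^ q :=
    rpow_le_rpow_of_nonpos h1t hle hq
  rw [Real.mul_rpow hKpos.le h1s.le] at h1
  have h2 : (K^2) ^ (-q) * ((K^2) ^ q * (1 + s^2) ^ q) ≤ (K^2) ^ (-q) * (1 + t^2) ^ q :=
    mul_le_mul_of_nonneg_left h1 (rpow_pos_of_pos hKpos _).le
  calc (1 + s^2) ^ q = (K^2) ^ (-q) * ((K^2) ^ q * (1 + s^2) ^ q) := by
        rw [← mul_assoc, ← Real.rpow_add hKpos]; simp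
    _ ≤ _ := h2

-- N(t) = (1+t²)^q * t is monotone for -1/4 ≤ q ≤ 0
lemma N_mono {a d q : ℝ} (ha : 0 ≤ a) (had : a ≤ d) (hq4 : -(1/4) ≤ q) (hq : q ≤ 0) :
    (1 + a^2) ^ q * a ≤ (1 + d^2) ^ q * d := by
  rcases eq_or_lt_of_le (ha.trans had) with h | hd
  · have ha0 : a = 0 := le_antisymm (had.trans h.symm.le) ha
    simp [← h, ha0]
  have h1a : (0:ℝ) < 1 + a^2 := by positivity
  have h1d : (0:ℝ) < 1 + d^2 := by positivity
  set r : ℝ := (1 + a^2) / (1 + d^2) with hr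
  have hr0 : 0 < r := by positivity
  have hr1 : r ≤ 1 := by rw [hr, div_le_one h1d]; nlinarith
  have hsq : a^2 ≤ d^2 := by nlinarith
  have h2' : a^4 ≤ d^4 := by nlinarith
  have h3' : a^4*d^2 ≤ a^2*d^4 := by nlinarith [mul_le_mul_of_nonneg_left hsq (mul_nonneg (sq_nonneg a) (sq_nonneg d))]
  have hpow : (a / d)^4 ≤ r := by
    rw [hr, div_pow, div_le_div_iff₀ (by positivity) h1d]
    nlinarith [h2', h3']
  have had4 : a / d ≤ r ^ ((1:ℝ)/4) := by
    have h4 : (r ^ ((1:ℝ)/4))^4 = r := by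
      rw [← Real.rpow_natCast (r ^ ((1:ℝ)/4)) 4, ← Real.rpow_mul hr0.le]
      norm_num
    have := pow_le_pow_iff_left₀ (by positivity : (0:ℝ) ≤ a/d)
      (by positivity : (0:ℝ) ≤ r ^ ((1:ℝ)/4)) (by norm_num : 4 ≠ 0)
    rw [← this, h4]; exact hpow
  have hstep : r ^ ((1:ℝ)/4) ≤ r ^ (-q) :=
    Real.rpow_le_rpow_of_exponent_ge hr0 hr1 (by linarith)
  have haled : a ≤ d * r ^ (-q) := by
    have := (div_le_iff₀ hd).mp (had4.trans hstep)
    linarith [this]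
  calc (1 + a^2) ^ q * a ≤ (1 + a^2) ^ q * (d * r ^ (-q)) :=
        mul_le_mul_of_nonneg_left haled (rpow_pos_of_pos h1a _).le
    _ = (1 + a^2) ^ q * (d * ((1 + a^2)^(-q) / (1 + d^2)^(-q))) := by
        rw [hr, Real.div_rpow h1a.le h1d.le]
    _ = (1 + d^2) ^ q * d := by
        rw [Real.rpow_neg h1a.le, Real.rpow_neg h1d.le]
        have h1 : (1+a^2)^q ≠ 0 := (rpow_pos_of_pos h1a q).ne'
        have h2 : (1+d^2)^q ≠ 0 := (rpow_pos_of_pos h1d q).ne'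
        field_simp

-- phi difference bound
lemma phi_diff {a b q : ℝ} (ha : 0 ≤ a) (hab : a ≤ b) (hq0 : -1 ≤ q) (hq : q ≤ 0) :
    (1 + a^2) ^ q - (1 + b^2) ^ q ≤ (-q) * (1 + a^2) ^ (q - 1) * (b^2 - a^2) := by
  have h1a : (0:ℝ) < 1 + a^2 := by positivity
  set s : ℝ := (b^2 - a^2) / (1 + a^2) with hs
  have hs0 : 0 ≤ s := by apply div_nonneg _ h1a.le; nlinarith
  have hber := bern_neg hs0 hq0 hq
  have hbs : (1 + b^2) = (1 + a^2) * (1 + s) := by rw [hs, mul_add, mul_div_assoc', mul_div_cancel_left₀ _ h1a.ne']; ring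
  have hrw : (1 + b^2) ^ q = (1 + a^2) ^ q * (1 + s) ^ q := by
    rw [hbs, Real.mul_rpow h1a.le (by linarith)]
  have h2 : (1 + a^2) ^ q * (1 + q * s) ≤ (1 + b^2) ^ q := by
    rw [hrw]; exact mul_le_mul_of_nonneg_left hber (rpow_pos_of_pos h1a _).le
  have h3 : (1 + a^2) ^ q * s = (1 + a^2) ^ (q - 1) * (b^2 - a^2) := by
    rw [hs, Real.rpow_sub_one h1a.ne']
    field_simp
  nlinarith [h2, h3]

noncomputable def Vp (p : ℝ) {E : Type*} [NormedAddCommGroup E] [NormedSpace ℝ E] (z : E) : E :=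
  ((1 + ‖z‖ ^ 2) ^ ((p - 2) / 4)) • z

set_option maxHeartbeats 1000000 in
theorem stmt_5 (k : ℕ) (hk : 1 ≤ k) (p : ℝ) (hp1 : 1 < p) (hp2 : p < 2) :
    ∃ c : ℝ, 0 < c ∧ ∀ z η : EuclideanSpace ℝ (Fin k),
      ‖Vp p z - Vp p η‖ ≤ c * ‖Vp p (z - η)‖ := by
  set q : ℝ := (p - 2) / 4 with hqdef
  have hq : q < 0 := by rw [hqdef]; linarith
  have hq4 : -(1/4) < q := by rw [hqdef]; linarith
  set c : ℝ := (4:ℝ) ^ (-q) + (3 * (9:ℝ) ^ (-q) + 1) with hcdef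
  have hc : 0 < c := by
    have := rpow_pos_of_pos (by norm_num : (0:ℝ) < 4) (-q)
    have := rpow_pos_of_pos (by norm_num : (0:ℝ) < 9) (-q)
    positivity
  refine ⟨c, hc, ?_⟩
  have hnorm : ∀ w : EuclideanSpace ℝ (Fin k), ‖Vp p w‖ = (1 + ‖w‖^2) ^ q * ‖w‖ := by
    intro w
    rw [Vp, norm_smul, Real.norm_eq_abs,
      abs_of_pos (rpow_pos_of_pos (by positivity) _)]
  -- main inequality under assumption ‖η‖ ≤ ‖z‖
  have key : ∀ z η : EuclideanSpace ℝ (Fin k), ‖η‖ ≤ ‖z‖ →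
      ‖Vp p z - Vp p η‖ ≤ c * ‖Vp p (z - η)‖ := by
    intro z η hab
    set a : ℝ := ‖η‖ with hadef
    set b : ℝ := ‖z‖ with hbdef
    set d : ℝ := ‖z - η‖ with hddef
    have ha : 0 ≤ a := norm_nonneg _
    have hb : 0 ≤ b := norm_nonneg _
    have hd : 0 ≤ d := norm_nonneg _
    have hbad : b - a ≤ d := norm_sub_norm_le z η
    have hdab : d ≤ b + a := norm_sub_le z η
    have h1a : (0:ℝ) < 1 + a^2 := by positivity
    have h1b : (0:ℝ) < 1 + b^2 := by positivity
    have h1d : (0:ℝ) < 1 + d^2 := by positivity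
    have hphi : (1 + b^2) ^ q ≤ (1 + a^2) ^ q :=
      rpow_le_rpow_of_nonpos h1a (by nlinarith [mul_self_le_mul_self ha hab]) hq.le
    have hdecomp : Vp p z - Vp p η
        = ((1 + b^2) ^ q) • (z - η) + (((1 + b^2) ^ q - (1 + a^2) ^ q)) • η := by
      rw [Vp, Vp, ← hadef, ← hbdef]
      module
    have hnd : ‖Vp p (z - η)‖ = (1 + d^2) ^ q * d := hnorm _
    have hle1 : ‖Vp p z - Vp p η‖ ≤ (1 + b^2) ^ q * d + ((1 + a^2) ^ q - (1 + b^2) ^ q) * a := by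
      rw [hdecomp]
      refine (norm_add_le _ _).trans ?_
      rw [norm_smul, norm_smul, Real.norm_eq_abs, Real.norm_eq_abs,
        abs_of_pos (rpow_pos_of_pos h1b q), abs_of_nonpos (by linarith)]
      simp only [← hadef, ← hddef]
      ring_nf
      exact le_rfl
    -- term 1
    have hterm1 : (1 + b^2) ^ q * d ≤ (4:ℝ) ^ (-q) * ((1 + d^2) ^ q * d) := by
      have := ratio_lem hb hd (by norm_num : (1:ℝ) ≤ 2) (by linarith : d ≤ 2 * b) hq.le
      calc (1 + b^2) ^ q * d ≤ ((2:ℝ)^2) ^ (-q) * (1 + d^2) ^ q * d := by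
            exact mul_le_mul_of_nonneg_right this hd
        _ = (4:ℝ) ^ (-q) * ((1 + d^2) ^ q * d) := by norm_num; ring
    -- term 2
    have hterm2 : ((1 + a^2) ^ q - (1 + b^2) ^ q) * a
        ≤ (3 * (9:ℝ) ^ (-q) + 1) * ((1 + d^2) ^ q * d) := by
      have hNd : 0 ≤ (1 + d^2) ^ q * d := mul_nonneg (rpow_pos_of_pos h1d q).le hd
      have h9 : 0 < (9:ℝ) ^ (-q) := rpow_pos_of_pos (by norm_num) _
      by_cases hcase : b ≤ 2 * a
      · -- case b ≤ 2a
        have hdiff := phi_diff ha hab (by linarith) hq.le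
        have hda : d ≤ 3 * a := by linarith
        have hratio := ratio_lem ha hd (by norm_num : (1:ℝ) ≤ 3) hda hq.le
        have hq1 : -q ≤ 1 := by linarith
        have hkey : (-q) * (1 + a^2) ^ (q-1) * (b^2 - a^2) * a ≤ 3 * ((1 + a^2) ^ q * d) := by
          have hsub : (1 + a^2) ^ (q-1) * (1 + a^2) = (1 + a^2) ^ q := by
            rw [Real.rpow_sub_one h1a.ne']
            field_simp
          have hfac : (b^2 - a^2) * a ≤ 3 * (1 + a^2) * d := by
            have h1 : (b + a) * a ≤ 3 * (1 + a^2) := by nlinarith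
            have h2 : 0 ≤ b - a := by linarith
            calc (b^2 - a^2) * a = ((b + a) * a) * (b - a) := by ring
              _ ≤ (3 * (1 + a^2)) * d := by
                  apply mul_le_mul h1 hbad h2 (by positivity)
          have hpq : (0:ℝ) < (1 + a^2) ^ (q-1) := rpow_pos_of_pos h1a _
          calc (-q) * (1 + a^2) ^ (q-1) * (b^2 - a^2) * a
              ≤ 1 * (1 + a^2) ^ (q-1) * ((b^2 - a^2) * a) := by
                have hbb : 0 ≤ (b^2 - a^2) * a := by nlinarith [mul_self_le_mul_self ha hab]
                have := mul_le_mul_of_nonneg_right (mul_le_mul_of_nonneg_right hq1 hpq.le) hbb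
                calc (-q) * (1 + a^2) ^ (q-1) * (b^2 - a^2) * a
                    = (-q) * (1 + a^2) ^ (q-1) * ((b^2 - a^2) * a) := by ring
                  _ ≤ 1 * (1 + a^2) ^ (q-1) * ((b^2 - a^2) * a) := this
            _ ≤ 1 * (1 + a^2) ^ (q-1) * (3 * (1 + a^2) * d) :=
                mul_le_mul_of_nonneg_left hfac (by positivity)
            _ = 3 * ((1 + a^2) ^ (q-1) * (1 + a^2)) * d := by ring
            _ = 3 * ((1 + a^2) ^ q * d) := by rw [hsub]; ring
        have hm : ((1 + a^2) ^ q - (1 + b^2) ^ q) * a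
            ≤ (-q) * (1 + a^2) ^ (q-1) * (b^2 - a^2) * a :=
          mul_le_mul_of_nonneg_right hdiff ha
        have hm2 : 3 * ((1 + a^2) ^ q * d) ≤ 3 * ((9:ℝ)^(-q) * (1 + d^2) ^ q * d) := by
          have h0 := mul_le_mul_of_nonneg_right hratio hd
          have h9' : ((3:ℝ)^2) ^ (-q) = (9:ℝ) ^ (-q) := by norm_num
          rw [h9'] at h0
          linarith
        calc ((1 + a^2) ^ q - (1 + b^2) ^ q) * a
            ≤ 3 * ((1 + a^2) ^ q * d) := hm.trans hkey
          _ ≤ 3 * ((9:ℝ)^(-q) * (1 + d^2) ^ q * d) := hm2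
          _ = (3 * (9:ℝ)^(-q)) * ((1 + d^2) ^ q * d) := by ring
          _ ≤ (3 * (9:ℝ) ^ (-q) + 1) * ((1 + d^2) ^ q * d) := by linarith [hNd]
      · -- case b > 2a : then a < d and N monotone
        push_neg at hcase
        have had : a ≤ d := by linarith
        have hN := N_mono ha had hq4.le hq.le
        have hstep : ((1 + a^2) ^ q - (1 + b^2) ^ q) * a ≤ (1 + a^2) ^ q * a := by
          apply mul_le_mul_of_nonneg_right _ ha
          have := rpow_pos_of_pos h1b q
          linarith
        calc ((1 + a^2) ^ q - (1 + b^2) ^ q) * a ≤ (1 + a^2) ^ q * a := hstep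
          _ ≤ (1 + d^2) ^ q * d := hN
          _ ≤ (3 * (9:ℝ) ^ (-q) + 1) * ((1 + d^2) ^ q * d) := by nlinarith [hNd, h9]
    rw [hnd]
    calc ‖Vp p z - Vp p η‖ ≤ (1 + b^2) ^ q * d + ((1 + a^2) ^ q - (1 + b^2) ^ q) * a := hle1
      _ ≤ (4:ℝ) ^ (-q) * ((1 + d^2) ^ q * d) + (3 * (9:ℝ)^(-q) + 1) * ((1 + d^2) ^ q * d) :=
          add_le_add hterm1 hterm2
      _ = c * ((1 + d^2) ^ q * d) := by rw [hcdef]; ring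
  intro z η
  rcases le_total ‖η‖ ‖z‖ with h | h
  · exact key z η h
  · have h1 : ‖Vp p z - Vp p η‖ = ‖Vp p η - Vp p z‖ := norm_sub_rev _ _
    have h2 : ‖Vp p (z - η)‖ = ‖Vp p (η - z)‖ := by
      rw [hnorm, hnorm, norm_sub_rev]
    rw [h1, h2]
    exact key η z h
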